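/- Let p ≥ 1 and let B and C be p×p integer matrices, where B is upper triangular with diagonal entries b₁, …, b_p, and C is in Smith normal form with diagonal entries c₁, …, c_p. Then gcd(b_j, c_j) = 1 for every j ∈ {1, …, p} if and only if the ℤ-linear map ℤ^(2p) → ℤ^p induced by the concatenated p×2p matrix (B C) is surjective. -/

import Mathlib

open Matrix

-- divisibility chain
lemma chain_dvd_aux (p : ℕ) (C : Matrix (Fin p) (Fin p) ℤ)
    (hCdvd : ∀ i : Fin p, ∀ h : (i : ℕ) + 1 < p,
      C i i ∣ C ⟨(i : ℕ) + 1, h⟩ ⟨(i : ℕ) + 1, h⟩) :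
    ∀ a b : Fin p, a ≤ b → C a a ∣ C b b := by
  suffices H : ∀ n : ℕ, ∀ a b : Fin p, (b : ℕ) = (a : ℕ) + n → C a a ∣ C b b by
    intro a b hab
    exact H ((b : ℕ) - (a : ℕ)) a b (by omega)
  intro n
  induction n with
  | zero =>
    intro a b h
    have : a = b := Fin.ext (by omega)
    subst this; exact dvd_rfl
  | succ n ih =>
    intro a b h
    have hb' : (b : ℕ) - 1 < p := by omega
    set b' : Fin p := ⟨(b : ℕ) - 1, hb'⟩ with hb'def
    have h1 : (b' : ℕ) + 1 < p := by
      have := b.isLt; simp only [hb'def]; omega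
    have h2 : C a a ∣ C b' b' := ih a b' (by simp only [hb'def]; omega)
    have h3 := hCdvd b' h1
    have h4 : (⟨(b' : ℕ) + 1, h1⟩ : Fin p) = b := Fin.ext (by simp only [hb'def]; omega)
    rw [h4] at h3
    exact h2.trans h3


lemma fwd_surj (p : ℕ) (B C : Matrix (Fin p) (Fin p) ℤ)
    (hB : ∀ i j : Fin p, j < i → B i j = 0)
    (hCdiag : ∀ i j : Fin p, i ≠ j → C i j = 0)
    (hgcd : ∀ j : Fin p, Int.gcd (B j j) (C j j) = 1) :
    Function.Surjective (Matrix.fromCols B C).mulVecLin := by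
  set f := (Matrix.fromCols B C).mulVecLin with hf
  have key : ∀ j : Fin p, Pi.single j (1 : ℤ) ∈ LinearMap.range f := by
    have H : ∀ n : ℕ, ∀ j : Fin p, (j : ℕ) < n → Pi.single j (1 : ℤ) ∈ LinearMap.range f := by
      intro n
      induction n with
      | zero => intro j h; omega
      | succ n ih =>
        intro j hj
        -- the B-column and C-column are in the range
        have h1 : B.mulVec (Pi.single j 1) ∈ LinearMap.range f := by
          refine ⟨Sum.elim (Pi.single j 1) 0, ?_⟩
          simp [hf, mulVecLin_apply]
          rfl
        have h2 : C.mulVec (Pi.single j 1) ∈ LinearMap.range f := by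
          refine ⟨Sum.elim 0 (Pi.single j 1), ?_⟩
          simp [hf, mulVecLin_apply]
          rfl
        have hS : (∑ i : Fin p, (if i < j then B i j else 0) • Pi.single i (1 : ℤ))
            ∈ LinearMap.range f := by
          refine Submodule.sum_mem _ fun i _ => ?_
          by_cases h : i < j
          · exact Submodule.smul_mem _ _ (ih i (by omega))
          · simp [h]
        have hCeq : C.mulVec (Pi.single j 1) = C j j • Pi.single j (1 : ℤ) := by
          funext k
          by_cases h : k = j
          · subst h; simp
          · simp [Pi.single_apply, h, hCdiag k j h]
        have hBeq : B j j • Pi.single j (1 : ℤ)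
            = B.mulVec (Pi.single j 1)
              - ∑ i : Fin p, (if i < j then B i j else 0) • Pi.single i (1 : ℤ) := by
          funext k
          have hsum : (∑ i : Fin p, (if i < j then B i j else 0) • Pi.single i (1 : ℤ)) k
              = if k < j then B k j else 0 := by
            rw [Finset.sum_apply]
            rw [Finset.sum_eq_single k]
            · simp [Pi.single_apply]
            · intro i _ hik
              simp [Pi.single_apply, Ne.symm hik]
            · simp
          simp only [Pi.sub_apply, hsum, Pi.smul_apply, Pi.single_apply, mulVec_single]
          rcases lt_trichotomy k j with h | h | h
          · simp [h, h.ne]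
          · subst h; simp
          · simp [hB k j h, h.ne', not_lt.mpr h.le]
        have hBj : B j j • Pi.single j (1 : ℤ) ∈ LinearMap.range f := by
          rw [hBeq]; exact Submodule.sub_mem _ h1 hS
        have hCj : C j j • Pi.single j (1 : ℤ) ∈ LinearMap.range f := by
          rw [← hCeq]; exact h2
        obtain ⟨a, b, hab⟩ := (Int.isCoprime_iff_gcd_eq_one.mpr (hgcd j))
        have : (Pi.single j (1 : ℤ) : Fin p → ℤ)
            = a • (B j j • Pi.single j (1 : ℤ)) + b • (C j j • Pi.single j (1 : ℤ)) := by
          rw [smul_smul, smul_smul, ← add_smul, hab, one_smul]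
        rw [this]
        exact Submodule.add_mem _ (Submodule.smul_mem _ _ hBj) (Submodule.smul_mem _ _ hCj)
    exact fun j => H p j j.isLt
  rw [← LinearMap.range_eq_top, Submodule.eq_top_iff']
  intro x
  have hx : x = ∑ i : Fin p, x i • Pi.single i (1 : ℤ) := by
    refine (pi_eq_sum_univ x).trans ?_
    refine Finset.sum_congr rfl fun i _ => ?_
    congr 1
    funext k
    simp [Pi.single_apply, eq_comm]
  rw [hx]
  exact Submodule.sum_mem _ fun i _ => Submodule.smul_mem _ _ (key i)


lemma bwd_gcd (p : ℕ) (B C : Matrix (Fin p) (Fin p) ℤ)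
    (hB : ∀ i j : Fin p, j < i → B i j = 0)
    (hCdiag : ∀ i j : Fin p, i ≠ j → C i j = 0)
    (hCdvd : ∀ i : Fin p, ∀ h : (i : ℕ) + 1 < p,
      C i i ∣ C ⟨(i : ℕ) + 1, h⟩ ⟨(i : ℕ) + 1, h⟩)
    (hsurj : Function.Surjective (Matrix.fromCols B C).mulVecLin) :
    ∀ j : Fin p, Int.gcd (B j j) (C j j) = 1 := by
  intro j
  by_contra hne
  obtain ⟨q, hq, hqdvd⟩ := Nat.exists_prime_and_dvd hne
  haveI : Fact q.Prime := ⟨hq⟩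
  have hqB : (q : ℤ) ∣ B j j :=
    dvd_trans (Int.natCast_dvd_natCast.mpr hqdvd) (Int.gcd_dvd_left _ _)
  have hqC : (q : ℤ) ∣ C j j :=
    dvd_trans (Int.natCast_dvd_natCast.mpr hqdvd) (Int.gcd_dvd_right _ _)
  set φ := Int.castRingHom (ZMod q) with hφ
  set M : Matrix (Fin p) (Fin p) (ZMod q) :=
    Matrix.of (fun i k : Fin p =>
      if i < j then (if k = i then (1 : ZMod q) else 0) else ((B i k : ℤ) : ZMod q)) with hM
  have hMtri : M.BlockTriangular id := by
    intro i k hki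
    simp only [hM, of_apply]
    by_cases h : i < j
    · simp [h, (show k ≠ i from ne_of_lt hki)]
    · simp [h, hB i k hki]
  have hdet : M.det = 0 := by
    rw [Matrix.det_of_upperTriangular hMtri]
    refine Finset.prod_eq_zero (Finset.mem_univ j) ?_
    simp only [hM, of_apply]
    simpa using (ZMod.intCast_zmod_eq_zero_iff_dvd (B j j) q).mpr hqB
  obtain ⟨v, hv0, hvM⟩ := Matrix.exists_vecMul_eq_zero_iff.mpr hdet
  -- components of v below j vanish
  have hvlow : ∀ k : Fin p, k < j → v k = 0 := by
    intro k hk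
    have h := congrFun hvM k
    simp only [vecMul, dotProduct, Pi.zero_apply] at h
    rw [Finset.sum_eq_single k] at h
    · simpa [hM, hk] using h
    · intro i _ hik
      by_cases h' : i < j
      · simp [hM, Ne.symm hik, h']
      · have : k < i := lt_of_lt_of_le hk (not_lt.mp h')
        simp [hM, h', hB i k this]
    · simp
  -- v kills B mod q
  have hvB : ∀ k : Fin p, (∑ i : Fin p, v i * ((B i k : ℤ) : ZMod q)) = 0 := by
    intro k
    have h := congrFun hvM k
    simp only [vecMul, dotProduct, Pi.zero_apply] at h
    rw [← h]
    refine Finset.sum_congr rfl fun i _ => ?_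
    by_cases h' : i < j
    · simp [hvlow i h']
    · simp [hM, h']
  -- v kills C mod q
  have hvC : ∀ k : Fin p, (∑ i : Fin p, v i * ((C i k : ℤ) : ZMod q)) = 0 := by
    intro k
    rw [Finset.sum_eq_single k]
    · by_cases h' : k < j
      · simp [hvlow k h']
      · have : (q : ℤ) ∣ C k k :=
          hqC.trans (chain_dvd_aux p C hCdvd j k (not_lt.mp h'))
        rw [(ZMod.intCast_zmod_eq_zero_iff_dvd _ _).mpr this, mul_zero]
    · intro i _ hik
      simp [hCdiag i k hik]
    · simp
  -- get contradiction from surjectivity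
  obtain ⟨i, hvi⟩ := Function.ne_iff.mp hv0
  obtain ⟨x, hx⟩ := hsurj (Pi.single i 1)
  rw [mulVecLin_apply] at hx
  have hmap : (fromCols B C).map φ *ᵥ (φ ∘ x) = φ ∘ Pi.single i 1 := by
    funext k
    rw [← RingHom.map_mulVec, hx]
    rfl
  have hker : v ᵥ* ((fromCols B C).map φ) = 0 := by
    funext k
    simp only [vecMul, dotProduct, map_apply, Pi.zero_apply]
    cases k with
    | inl k => exact hvB k
    | inr k => exact hvC k
  have h1 : v ⬝ᵥ ((fromCols B C).map φ *ᵥ (φ ∘ x)) = 0 := by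
    rw [dotProduct_mulVec, hker, zero_dotProduct]
  rw [hmap] at h1
  have h2 : v ⬝ᵥ (φ ∘ Pi.single i 1) = v i := by
    simp only [dotProduct, Function.comp_apply, Pi.single_apply, hφ]
    rw [Finset.sum_eq_single i] <;> simp +contextual
  rw [h2] at h1
  exact hvi (by simpa using h1)

/-- Proposition `simplprop` of Section 5: for `B` upper triangular and `C` in Smith
normal form, `gcd(bⱼ, cⱼ) = 1` for every `j` iff the concatenated matrix `(B C)`
induces a surjective map `ℤ^(2p) → ℤ^p`. -/
theorem prop_simplprop (p : ℕ) (hp : 1 ≤ p)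
    (B C : Matrix (Fin p) (Fin p) ℤ)
    (hB : ∀ i j : Fin p, j < i → B i j = 0)
    (hCdiag : ∀ i j : Fin p, i ≠ j → C i j = 0)
    (hCdvd : ∀ i : Fin p, ∀ h : (i : ℕ) + 1 < p,
      C i i ∣ C ⟨(i : ℕ) + 1, h⟩ ⟨(i : ℕ) + 1, h⟩) :
    (∀ j : Fin p, Int.gcd (B j j) (C j j) = 1) ↔
      Function.Surjective (Matrix.fromCols B C).mulVecLin := by
  constructor
  · exact fwd_surj p B C hB hCdiag
  · exact bwd_gcd p B C hB hCdiag hCdvd
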